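/- arXiv:1607.00525 — 8 statements merged into one kernel-verified Lean document; each statement's English description precedes it below -/
import Mathlib

section
/- Let $X_0 \geq 0$ and $X_k \geq 0$ for $k = 1, \dots, N$ satisfy $X_k^2 \leq X_0^2 + C_1 + C_2 \sum_{i=0}^{k} X_i$ for all $k \in \{1, \dots, N\}$, where $C_1, C_2 \geq 0$. Then $X_k \leq X_0 + \sqrt{C_1} + C_2 k$ for all $k \in \{1, \dots, N\}$. -/
namespace Original

/-- Discrete Grönwall-type inequality. -/
theorem discrete_gronwall (N : ℕ) (X : ℕ → ℝ) (C1 C2 : ℝ)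
    (hX : ∀ k, k ≤ N → 0 ≤ X k) (hC1 : 0 ≤ C1) (hC2 : 0 ≤ C2)
    (h : ∀ k, 1 ≤ k → k ≤ N →
      (X k) ^ 2 ≤ (X 0) ^ 2 + C1 + C2 * ∑ i ∈ Finset.range (k + 1), X i) :
    ∀ k, 1 ≤ k → k ≤ N → X k ≤ X 0 + Real.sqrt C1 + C2 * k := by
  have s1 : Real.sqrt C1 ^ 2 = C1 := Real.sq_sqrt hC1
  have s0 : 0 ≤ Real.sqrt C1 := Real.sqrt_nonneg _
  have main : ∀ k, k ≤ N → X k ≤ X 0 + Real.sqrt C1 + C2 * k := by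
    intro k
    induction k using Nat.strong_induction_on with
    | _ k ih =>
      intro hkN
      rcases Nat.eq_zero_or_pos k with h0 | hpos
      · subst h0; simp
      · have hk1 : 1 ≤ k := hpos
        have hk1R : (1:ℝ) ≤ (k:ℝ) := by exact_mod_cast hk1
        have hsum : ∑ i ∈ Finset.range k, X i ≤
            ∑ i ∈ Finset.range k, (X 0 + Real.sqrt C1 + C2 * i) := by
          apply Finset.sum_le_sum
          intro i hi
          have hik : i < k := Finset.mem_range.mp hi
          exact ih i hik (le_trans (le_of_lt hik) hkN)
        have hS : ∑ i ∈ Finset.range k, (X 0 + Real.sqrt C1 + C2 * i)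
            = k * (X 0 + Real.sqrt C1) + C2 * ∑ i ∈ Finset.range k, (i:ℝ) := by
          rw [Finset.sum_add_distrib, Finset.sum_const, ← Finset.mul_sum, Finset.card_range]
          push_cast
          ring
        have hgauss : (∑ i ∈ Finset.range k, (i:ℝ)) * 2 = (k:ℝ) * ((k:ℝ) - 1) := by
          have := Finset.sum_range_id_mul_two k
          have h2 : ((∑ i ∈ Finset.range k, i) * 2 : ℕ) = k * (k - 1) := this
          have : ((∑ i ∈ Finset.range k, (i:ℝ))) * 2 = ((k * (k-1) : ℕ) : ℝ) := by
            push_cast [← h2]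
            ring
          rw [this]
          push_cast [Nat.cast_sub hk1]
          ring
        have hk := h k hk1 hkN
        rw [Finset.sum_range_succ] at hk
        have hXk : 0 ≤ X k := hX k hkN
        set S := ∑ i ∈ Finset.range k, (i:ℝ)
        set T := ∑ i ∈ Finset.range k, X i
        rw [hS] at hsum
        have hX0 : 0 ≤ X 0 := hX 0 (le_trans (Nat.zero_le k) hkN)
        have hkR0 : (0:ℝ) ≤ (k:ℝ) := by linarith
        have hB : X k ^ 2 - C2 * X k ≤ (X 0 + Real.sqrt C1 + C2 * k) ^ 2
            - C2 * (X 0 + Real.sqrt C1 + C2 * k) := by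
          nlinarith [mul_nonneg (mul_nonneg hC2 (add_nonneg hX0 s0)) (sub_nonneg.mpr hk1R),
            mul_nonneg hX0 s0,
            mul_nonneg (mul_nonneg hC2 hC2) (mul_nonneg hkR0 (by linarith : (0:ℝ) ≤ (k:ℝ) - 1))]
        have hBC : C2 ≤ X 0 + Real.sqrt C1 + C2 * k := by
          nlinarith [mul_nonneg hC2 (sub_nonneg.mpr hk1R)]
        nlinarith [hB, hXk, hBC]
  intro k _ hkN
  exact main k hkN
end Original
end

section
/- Define $Y_k := X_0^2 + C_1 + C_2 \sum_{i=0}^k X_i$ where $X_i \geq 0$, $C_1, C_2 \geq 0$, and assume $X_k^2 \leq Y_k$ for all $k$. Then $\sqrt{Y_k} - \sqrt{Y_{k-1}} \leq C_2$ for all $k \geq 1$, and hence $\sqrt{Y_k} \leq \sqrt{Y_0} + C_2 k$. -/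
/-- Estimate on the square roots of the auxiliary sequence `Y` in the
discrete Grönwall lemma. -/
theorem sqrt_aux_estimate (X : ℕ → ℝ) (C1 C2 : ℝ) (Y : ℕ → ℝ)
    (hX : ∀ i, 0 ≤ X i) (hC1 : 0 ≤ C1) (hC2 : 0 ≤ C2)
    (hY : ∀ k, Y k = (X 0) ^ 2 + C1 + C2 * ∑ i ∈ Finset.range (k + 1), X i)
    (hXY : ∀ k, (X k) ^ 2 ≤ Y k) :
    (∀ k, Real.sqrt (Y (k + 1)) - Real.sqrt (Y k) ≤ C2) ∧
    (∀ k, Real.sqrt (Y k) ≤ Real.sqrt (Y 0) + C2 * k) := by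
  have hYnn : ∀ k, 0 ≤ Y k := by
    intro k
    rw [hY k]
    have : 0 ≤ ∑ i ∈ Finset.range (k + 1), X i :=
      Finset.sum_nonneg fun i _ => hX i
    positivity
  have hdiff : ∀ k, Y (k + 1) - Y k = C2 * X (k + 1) := by
    intro k
    rw [hY (k + 1), hY k, Finset.sum_range_succ]
    ring
  have hstep : ∀ k, Real.sqrt (Y (k + 1)) - Real.sqrt (Y k) ≤ C2 := by
    intro k
    set a := Real.sqrt (Y k) with ha
    set b := Real.sqrt (Y (k + 1)) with hb
    have ha2 : a ^ 2 = Y k := Real.sq_sqrt (hYnn k)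
    have hb2 : b ^ 2 = Y (k + 1) := Real.sq_sqrt (hYnn (k + 1))
    have hanb : 0 ≤ a := Real.sqrt_nonneg _
    have hbnb : 0 ≤ b := Real.sqrt_nonneg _
    have hXb : X (k + 1) ≤ b :=
      (Real.le_sqrt (hX (k + 1)) (hYnn (k + 1))).mpr (hXY (k + 1))
    have hd := hdiff k
    nlinarith [mul_nonneg hC2 (sub_nonneg.mpr hXb), mul_nonneg hanb hbnb]
  refine ⟨hstep, ?_⟩
  intro k
  induction k with
  | zero => simp
  | succ n ih =>
    have := hstep n
    push_cast
    push_cast at ih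
    linarith
end

section
/- Under the CFL condition $\Delta t \leq \Delta x/\overline{a}$ and $0 < \underline{a} \leq a_j \leq \overline{a}$, the upwind scheme $w_j^{n+1} = (1 - a_j \Delta t/\Delta x) w_j^n + (a_j \Delta t/\Delta x) w_{j-1}^n$ satisfies, for every constant $k \in \mathbb{R}$, the discrete $L^2$ entropy inequality $\frac{(w_j^{n+1} - k)^2}{a_j} - \frac{(w_j^n - k)^2}{a_j} + \frac{\Delta t}{\Delta x}\big((w_j^n - k)^2 - (w_{j-1}^n - k)^2\big) \leq 0$. -/
/-- Discrete entropy inequality (L² version) for the upwind scheme. -/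
theorem upwind_entropy_L2 (Nx : ℕ) [NeZero Nx]
    (a : ZMod Nx → ℝ) (w : ℕ → ZMod Nx → ℝ)
    (ua oa Δt Δx : ℝ)
    (hua : 0 < ua) (hbd : ∀ j, ua ≤ a j ∧ a j ≤ oa)
    (hΔx : 0 < Δx) (hΔt : 0 < Δt) (hcfl : Δt ≤ Δx / oa)
    (hscheme : ∀ n j, w (n + 1) j =
      (1 - a j * Δt / Δx) * w n j + (a j * Δt / Δx) * w n (j - 1)) :
    ∀ n j (k : ℝ),
      (w (n + 1) j - k) ^ 2 / a j - (w n j - k) ^ 2 / a j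
        + Δt / Δx * ((w n j - k) ^ 2 - (w n (j - 1) - k) ^ 2) ≤ 0 := by
  intro n j k
  obtain ⟨h1, h2⟩ := hbd j
  have ha : 0 < a j := lt_of_lt_of_le hua h1
  have hoa : 0 < oa := lt_of_lt_of_le ha h2
  have hΔta : a j * Δt ≤ Δx := by
    have := mul_le_mul h2 hcfl hΔt.le hoa.le
    rwa [mul_div_cancel₀ _ hoa.ne'] at this
  set u := w n j - k with hu
  set v := w n (j - 1) - k with hv
  have hw : w (n + 1) j - k = (1 - a j * Δt / Δx) * u + (a j * Δt / Δx) * v := by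
    rw [hscheme]; ring
  rw [hw, div_sub_div_same, div_add' _ _ _ ha.ne']
  rw [div_le_iff₀ ha]
  have key : ((1 - a j * Δt / Δx) * u + (a j * Δt / Δx) * v) ^ 2 - u ^ 2
      + (a j * Δt / Δx) * (u ^ 2 - v ^ 2) ≤ 0 := by
    have hl0 : 0 ≤ a j * Δt / Δx := by positivity
    have hl1 : a j * Δt / Δx ≤ 1 := by rw [div_le_one hΔx]; exact hΔta
    nlinarith [sq_nonneg (u - v), mul_nonneg hl0 (sq_nonneg (u - v)),
      mul_nonneg (mul_nonneg hl0 hl0) (sq_nonneg (u - v)),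
      mul_nonneg (mul_nonneg hl0 (sub_nonneg.mpr hl1)) (sq_nonneg (u - v))]
  calc ((1 - a j * Δt / Δx) * u + a j * Δt / Δx * v) ^ 2 - u ^ 2
      + Δt / Δx * (u ^ 2 - v ^ 2) * a j
      = ((1 - a j * Δt / Δx) * u + a j * Δt / Δx * v) ^ 2 - u ^ 2
      + a j * Δt / Δx * (u ^ 2 - v ^ 2) := by ring
    _ ≤ 0 := key
    _ = 0 * a j := by ring
end

section
/- Under the CFL condition $\Delta t \leq \Delta x/\overline{a}$, the periodic upwind scheme satisfies a discrete weighted $L^1$ bound: $\Delta x \sum_{j=1}^{N_x} |w_j^n|/a_j \leq \Delta x \sum_{j=1}^{N_x} |w_j^0|/a_j$ for all $n \geq 0$. -/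
/-- Discrete weighted L¹ stability of the periodic upwind scheme. -/
theorem upwind_L1_bound (Nx : ℕ) [NeZero Nx]
    (a : ZMod Nx → ℝ) (w : ℕ → ZMod Nx → ℝ)
    (ua oa Δt Δx : ℝ)
    (hua : 0 < ua) (hbd : ∀ j, ua ≤ a j ∧ a j ≤ oa)
    (hΔx : 0 < Δx) (hΔt : 0 < Δt) (hcfl : Δt ≤ Δx / oa)
    (hscheme : ∀ n j, w (n + 1) j =
      (1 - a j * Δt / Δx) * w n j + (a j * Δt / Δx) * w n (j - 1)) :
    ∀ n, Δx * ∑ j : ZMod Nx, |w n j| / a j ≤ Δx * ∑ j : ZMod Nx, |w 0 j| / a j := by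
  have hoa : 0 < oa := lt_of_lt_of_le hua (le_trans (hbd 0).1 (hbd 0).2)
  have ha : ∀ j, 0 < a j := fun j => lt_of_lt_of_le hua (hbd j).1
  have hlam1 : ∀ j, a j * Δt / Δx ≤ 1 := by
    intro j
    rw [div_le_one hΔx]
    calc a j * Δt ≤ oa * Δt := by nlinarith [(hbd j).2]
      _ ≤ oa * (Δx / oa) := by nlinarith
      _ = Δx := by field_simp
  have hlam0 : ∀ j, 0 ≤ a j * Δt / Δx := fun j =>
    div_nonneg (mul_nonneg (ha j).le hΔt.le) hΔx.le
  have step : ∀ n, ∑ j : ZMod Nx, |w (n+1) j| / a j ≤ ∑ j : ZMod Nx, |w n j| / a j := by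
    intro n
    have h1 : ∀ j : ZMod Nx, |w (n+1) j| / a j ≤
        (|w n j| / a j - (Δt / Δx) * |w n j|) + (Δt / Δx) * |w n (j - 1)| := by
      intro j
      have habs : |w (n+1) j| ≤ (1 - a j * Δt / Δx) * |w n j| + (a j * Δt / Δx) * |w n (j-1)| := by
        rw [hscheme n j]
        calc |(1 - a j * Δt / Δx) * w n j + (a j * Δt / Δx) * w n (j - 1)|
            ≤ |(1 - a j * Δt / Δx) * w n j| + |(a j * Δt / Δx) * w n (j - 1)| := abs_add_le _ _
          _ = (1 - a j * Δt / Δx) * |w n j| + (a j * Δt / Δx) * |w n (j-1)| := by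
              rw [abs_mul, abs_mul, abs_of_nonneg (by linarith [hlam1 j]),
                abs_of_nonneg (hlam0 j)]
      have h2 : |w (n+1) j| / a j ≤
          ((1 - a j * Δt / Δx) * |w n j| + (a j * Δt / Δx) * |w n (j-1)|) / a j :=
        (div_le_div_iff_of_pos_right (ha j)).mpr habs
      have h3 : ((1 - a j * Δt / Δx) * |w n j| + (a j * Δt / Δx) * |w n (j-1)|) / a j
          = (|w n j| / a j - (Δt / Δx) * |w n j|) + (Δt / Δx) * |w n (j - 1)| := by
        have hx : Δx ≠ 0 := hΔx.ne'
        have haj : a j ≠ 0 := (ha j).ne'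
        field_simp
      linarith [h2, h3 ▸ h2]
    calc ∑ j : ZMod Nx, |w (n+1) j| / a j
        ≤ ∑ j : ZMod Nx, ((|w n j| / a j - (Δt / Δx) * |w n j|) + (Δt / Δx) * |w n (j - 1)|) :=
          Finset.sum_le_sum fun j _ => h1 j
      _ = ∑ j : ZMod Nx, |w n j| / a j - (Δt / Δx) * ∑ j : ZMod Nx, |w n j|
            + (Δt / Δx) * ∑ j : ZMod Nx, |w n (j - 1)| := by
          rw [Finset.sum_add_distrib, Finset.sum_sub_distrib, Finset.mul_sum, Finset.mul_sum]
      _ = ∑ j : ZMod Nx, |w n j| / a j := by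
          have hshift : ∑ j : ZMod Nx, |w n (j - 1)| = ∑ j : ZMod Nx, |w n j| :=
            Fintype.sum_equiv (Equiv.subRight (1 : ZMod Nx)) _ _ (fun j => rfl)
          rw [hshift]; ring
  intro n
  have : ∑ j : ZMod Nx, |w n j| / a j ≤ ∑ j : ZMod Nx, |w 0 j| / a j := by
    induction n with
    | zero => exact le_refl _
    | succ m ih => exact le_trans (step m) ih
  exact mul_le_mul_of_nonneg_left this hΔx.le
end

section
/- Under the CFL condition $\Delta t \leq \Delta x/\overline{a}$, the periodic upwind scheme satisfies the discrete weighted $L^2$ bound $\Delta x \sum_{j=1}^{N_x} (w_j^n)^2/a_j \leq \Delta x \sum_{j=1}^{N_x} (w_j^0)^2/a_j$ for all $n \geq 0$. -/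
/-- Discrete weighted L² stability of the periodic upwind scheme. -/
theorem upwind_L2_bound (Nx : ℕ) [NeZero Nx]
    (a : ZMod Nx → ℝ) (w : ℕ → ZMod Nx → ℝ)
    (ua oa Δt Δx : ℝ)
    (hua : 0 < ua) (hbd : ∀ j, ua ≤ a j ∧ a j ≤ oa)
    (hΔx : 0 < Δx) (hΔt : 0 < Δt) (hcfl : Δt ≤ Δx / oa)
    (hscheme : ∀ n j, w (n + 1) j =
      (1 - a j * Δt / Δx) * w n j + (a j * Δt / Δx) * w n (j - 1)) :
    ∀ n, Δx * ∑ j : ZMod Nx, (w n j) ^ 2 / a j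
      ≤ Δx * ∑ j : ZMod Nx, (w 0 j) ^ 2 / a j := by
  have hoa : 0 < oa := lt_of_lt_of_le hua (le_trans (hbd 0).1 (hbd 0).2)
  have hstep : ∀ n, ∑ j : ZMod Nx, (w (n+1) j) ^ 2 / a j
      ≤ ∑ j : ZMod Nx, (w n j) ^ 2 / a j := by
    intro n
    have key : ∀ j : ZMod Nx, (w (n+1) j) ^ 2 / a j ≤
        (w n j) ^ 2 / a j - (Δt/Δx) * (w n j) ^ 2 + (Δt/Δx) * (w n (j-1)) ^ 2 := by
      intro j
      have haj : 0 < a j := lt_of_lt_of_le hua (hbd j).1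
      have hν0 : 0 ≤ a j * Δt / Δx := by positivity
      have hν1 : a j * Δt / Δx ≤ 1 := by
        rw [div_le_one hΔx]
        calc a j * Δt ≤ oa * (Δx / oa) :=
              mul_le_mul (hbd j).2 hcfl hΔt.le hoa.le
          _ = Δx := by field_simp
      calc (w (n+1) j) ^ 2 / a j
          ≤ ((1 - a j * Δt / Δx) * (w n j) ^ 2 + (a j * Δt / Δx) * (w n (j-1)) ^ 2) / a j := by
            rw [div_le_div_iff_of_pos_right haj, hscheme n j]
            nlinarith [sq_nonneg (w n j - w n (j-1)),
              mul_nonneg hν0 (sub_nonneg.2 hν1)]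
        _ = (w n j) ^ 2 / a j - (Δt/Δx) * (w n j) ^ 2 + (Δt/Δx) * (w n (j-1)) ^ 2 := by
            field_simp
    have hshift : ∑ j : ZMod Nx, (w n (j-1)) ^ 2 = ∑ j : ZMod Nx, (w n j) ^ 2 :=
      Fintype.sum_equiv (Equiv.subRight (1 : ZMod Nx))
        (fun j => (w n (j-1)) ^ 2) (fun j => (w n j) ^ 2) (fun j => rfl)
    calc ∑ j : ZMod Nx, (w (n+1) j) ^ 2 / a j
        ≤ ∑ j : ZMod Nx, ((w n j) ^ 2 / a j - (Δt/Δx) * (w n j) ^ 2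
            + (Δt/Δx) * (w n (j-1)) ^ 2) :=
          Finset.sum_le_sum fun j _ => key j
      _ = ∑ j : ZMod Nx, (w n j) ^ 2 / a j := by
          rw [Finset.sum_add_distrib, Finset.sum_sub_distrib,
            ← Finset.mul_sum, ← Finset.mul_sum, hshift]
          ring
  intro n
  refine mul_le_mul_of_nonneg_left ?_ hΔx.le
  induction n with
  | zero => exact le_refl _
  | succ n ih => exact le_trans (hstep n) ih
end

section
/- Under the same assumptions (smooth coefficient $a^\delta$ bounded between $\underline{a}$ and $\overline{a}$, Hölder-$\gamma$ initial data), the solution $w^\delta$ of $\partial_t(w^\delta/a^\delta) + \partial_x w^\delta = 0$ is Hölder continuous in space uniformly in $\delta$: $\sup_{t} \sup_{|h| \leq \sigma} \|w^\delta(t, \cdot + h) - w^\delta(t,\cdot)\|_{L^\infty} \leq (\overline{a}/\underline{a})^{\gamma} |w_0|_{C^{0,\gamma}} \sigma^{\gamma}$. -/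
/-- Hölder continuity in space, uniformly in the regularization parameter, of the
solution of the regularized transport equation propagated along characteristics. -/
theorem holder_continuity_in_space
    (aδ : ℝ → ℝ) (K : NNReal) (haL : LipschitzWith K aδ)
    (ua oa M γ : ℝ) (hua : 0 < ua) (hbd : ∀ x, ua ≤ aδ x ∧ aδ x ≤ oa)
    (hγ : 0 < γ) (hM : 0 ≤ M)
    (η : ℝ → ℝ → ℝ)
    (hη0 : ∀ x0, η 0 x0 = x0)
    (hηd : ∀ t x0, HasDerivAt (fun s => η s x0) (aδ (η t x0)) t)
    (w0 : ℝ → ℝ) (w : ℝ → ℝ → ℝ)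
    -- the solution is constant along characteristics
    (hchar : ∀ t x0, w t (η t x0) = w0 x0)
    -- every point lies on a characteristic
    (hsurj : ∀ t x, ∃ x0, η t x0 = x)
    -- Hölder continuity of the initial data with seminorm `M`
    (hHolder : ∀ x y, |w0 x - w0 y| ≤ M * |x - y| ^ γ) :
    ∀ t σ, 0 ≤ σ → ∀ h, |h| ≤ σ → ∀ x,
      |w t (x + h) - w t x| ≤ (oa / ua) ^ γ * M * σ ^ γ := by
  intro t σ hσ h hh x
  obtain ⟨x0, hx0⟩ := hsurj t (x + h)
  obtain ⟨y0, hy0⟩ := hsurj t x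
  have hapos : ∀ z, 0 < aδ z := fun z => hua.trans_le (hbd z).1
  have hoa : 0 < oa := hua.trans_le ((hbd 0).1.trans (hbd 0).2)
  have hcont : Continuous fun y => (aδ y)⁻¹ :=
    haL.continuous.inv₀ fun y => (hapos y).ne'
  set F : ℝ → ℝ := fun z => ∫ y in (0:ℝ)..z, (aδ y)⁻¹ with hFdef
  have hFd : ∀ z, HasDerivAt F (aδ z)⁻¹ z := fun z =>
    (hcont.integral_hasStrictDerivAt 0 z).hasDerivAt
  -- F is constant along characteristics shifted by time
  have hFη : ∀ z s, F (η s z) = F z + s := by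
    intro z s
    have hg : ∀ u, HasDerivAt (fun r => F (η r z) - r) 0 u := by
      intro u
      have h1 : HasDerivAt (fun r => F (η r z)) ((aδ (η u z))⁻¹ * aδ (η u z)) u :=
        by have := (hFd (η u z)).comp u (hηd u z); exact this
      rw [inv_mul_cancel₀ (hapos _).ne'] at h1
      have h2 := h1.sub (hasDerivAt_id' u)
      exact h2.congr_deriv (sub_self _)
    have hconst : (fun r => F (η r z) - r) s = (fun r => F (η r z) - r) 0 :=
      is_const_of_deriv_eq_zero (fun u => (hg u).differentiableAt)
        (fun u => (hg u).deriv) s 0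
    simp only [hη0 z, sub_zero] at hconst
    linarith [hconst]
  -- increments of F
  have hFinc : ∀ a b : ℝ, a ≤ b →
      (b - a) * oa⁻¹ ≤ F b - F a ∧ F b - F a ≤ (b - a) * ua⁻¹ := by
    intro a b hab
    have hint : F b - F a = ∫ y in a..b, (aδ y)⁻¹ := by
      have := intervalIntegral.integral_add_adjacent_intervals
        (hcont.intervalIntegrable (μ := MeasureTheory.volume) 0 a) (hcont.intervalIntegrable a b)
      simp only [hFdef]
      linarith [this]
    constructor
    · rw [hint]
      calc (b - a) * oa⁻¹ = ∫ _ in a..b, oa⁻¹ := by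
            rw [intervalIntegral.integral_const]; simp [mul_comm]
        _ ≤ ∫ y in a..b, (aδ y)⁻¹ := by
            apply intervalIntegral.integral_mono_on hab
              (intervalIntegrable_const) (hcont.intervalIntegrable a b)
            intro y _
            exact inv_anti₀ (hapos y) (hbd y).2
    · rw [hint]
      calc (∫ y in a..b, (aδ y)⁻¹) ≤ ∫ _ in a..b, ua⁻¹ := by
            apply intervalIntegral.integral_mono_on hab
              (hcont.intervalIntegrable a b) intervalIntegrable_const
            intro y _
            exact inv_anti₀ hua (hbd y).1
        _ = (b - a) * ua⁻¹ := by rw [intervalIntegral.integral_const]; simp [mul_comm]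
  have hFabs1 : ∀ a b : ℝ, |b - a| ≤ oa * |F b - F a| := by
    intro a b
    rcases le_total a b with hab | hab
    · have := (hFinc a b hab).1
      rw [abs_of_nonneg (by linarith : (0:ℝ) ≤ b - a),
        abs_of_nonneg (by nlinarith [inv_pos.mpr hoa] : (0:ℝ) ≤ F b - F a)]
      calc b - a = oa * ((b - a) * oa⁻¹) := by field_simp
        _ ≤ oa * (F b - F a) := by nlinarith
    · have := (hFinc b a hab).1
      rw [abs_sub_comm b a, abs_sub_comm (F b) (F a),
        abs_of_nonneg (by linarith : (0:ℝ) ≤ a - b),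
        abs_of_nonneg (by nlinarith [inv_pos.mpr hoa] : (0:ℝ) ≤ F a - F b)]
      calc a - b = oa * ((a - b) * oa⁻¹) := by field_simp
        _ ≤ oa * (F a - F b) := by nlinarith
  have hFabs2 : ∀ a b : ℝ, |F b - F a| ≤ |b - a| * ua⁻¹ := by
    intro a b
    rcases le_total a b with hab | hab
    · have h1 := (hFinc a b hab).1
      have h2 := (hFinc a b hab).2
      rw [abs_of_nonneg (by linarith : (0:ℝ) ≤ b - a),
        abs_of_nonneg (by nlinarith [inv_pos.mpr hoa] : (0:ℝ) ≤ F b - F a)]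
      exact h2
    · have h1 := (hFinc b a hab).1
      have h2 := (hFinc b a hab).2
      rw [abs_sub_comm b a, abs_sub_comm (F b) (F a),
        abs_of_nonneg (by linarith : (0:ℝ) ≤ a - b),
        abs_of_nonneg (by nlinarith [inv_pos.mpr hoa] : (0:ℝ) ≤ F a - F b)]
      exact h2
  -- relate initial points
  have hFx : F x0 - F y0 = F (x + h) - F x := by
    have h1 := hFη x0 t
    have h2 := hFη y0 t
    rw [hx0] at h1; rw [hy0] at h2
    linarith
  have hdist : |x0 - y0| ≤ oa / ua * σ := by
    calc |x0 - y0| ≤ oa * |F x0 - F y0| := hFabs1 y0 x0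
      _ = oa * |F (x + h) - F x| := by rw [hFx]
      _ ≤ oa * (|x + h - x| * ua⁻¹) := by
          have := hFabs2 x (x + h)
          nlinarith
      _ = oa / ua * |h| := by rw [add_sub_cancel_left]; field_simp
      _ ≤ oa / ua * σ := by
          apply mul_le_mul_of_nonneg_left hh (by positivity)
  -- conclude
  have hw1 : w t (x + h) = w0 x0 := by rw [← hx0, hchar]
  have hw2 : w t x = w0 y0 := by rw [← hy0, hchar]
  rw [hw1, hw2]
  calc |w0 x0 - w0 y0| ≤ M * |x0 - y0| ^ γ := hHolder x0 y0
    _ ≤ M * (oa / ua * σ) ^ γ := by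
        apply mul_le_mul_of_nonneg_left _ hM
        exact Real.rpow_le_rpow (abs_nonneg _) hdist hγ.le
    _ = (oa / ua) ^ γ * M * σ ^ γ := by
        rw [Real.mul_rpow (by positivity) hσ]; ring
end

section
/- Let $u_j^n, v_j^n$ satisfy the finite difference scheme $D^+_t u_j^n = D^c_x v_j^n + \frac{\Delta x}{2} D^+_x D^-_x u_j^n$ and $D^+_t v_j^n / a_j = D^c_x u_j^n + \frac{\Delta x}{2} D^+_x D^-_x v_j^n$ on a periodic grid, with $0 < \underline{a} \leq a_j \leq \overline{a}$ and CFL condition $2\Delta t \max_j \max\{2a_j + 1,\, a_j/4 + 5/4\} \leq \Delta x$. Then the discrete energy is nonincreasing: $\Delta x \sum_j \big( (u_j^n)^2 + (v_j^n)^2/a_j \big) \leq \Delta x \sum_j \big( (u_j^0)^2 + (v_j^0)^2/a_j \big)$ for all $n \geq 0$. -/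
section aux

variable {Nx : ℕ} [NeZero Nx]

private lemma wse_shift (f : ZMod Nx → ℝ) :
    ∑ j : ZMod Nx, f (j+1) = ∑ j : ZMod Nx, f j :=
  Fintype.sum_equiv (Equiv.addRight 1) _ _ (fun _ => rfl)

private lemma wse_shift' (f : ZMod Nx → ℝ) :
    ∑ j : ZMod Nx, f (j-1) = ∑ j : ZMod Nx, f j :=
  Fintype.sum_equiv (Equiv.subRight 1) _ _ (fun _ => rfl)

private lemma wse_telescope (G : ZMod Nx → ℝ) :
    ∑ j : ZMod Nx, (G (j+1) - G j) = 0 := by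
  rw [Finset.sum_sub_distrib, wse_shift G, sub_self]

/-- pointwise quadratic bound -/
private lemma wse_foursq (x1 x2 y1 y2 a : ℝ) (ha : 0 ≤ a) :
    ((y1+y2)+(x1-x2))^2 + a*((x1+x2)+(y1-y2))^2
      ≤ 4*(1+a)*((x1^2+y1^2)+(x2^2+y2^2)) := by
  have h1 : ((y1+y2)+(x1-x2))^2 ≤ 4*((x1^2+y1^2)+(x2^2+y2^2)) := by
    nlinarith [sq_nonneg (y1-y2), sq_nonneg (y1-x1), sq_nonneg (y1+x2),
      sq_nonneg (y2-x1), sq_nonneg (y2+x2), sq_nonneg (x1+x2)]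
  have h2 : ((x1+x2)+(y1-y2))^2 ≤ 4*((x1^2+y1^2)+(x2^2+y2^2)) := by
    nlinarith [sq_nonneg (x1-x2), sq_nonneg (x1-y1), sq_nonneg (x1+y2),
      sq_nonneg (x2-y1), sq_nonneg (x2+y2), sq_nonneg (y1+y2)]
  nlinarith [mul_le_mul_of_nonneg_left h2 ha]

/-- One step of the scheme does not increase the discrete energy. -/
private lemma wse_step (a U V U' V' : ZMod Nx → ℝ) (l : ℝ) (hl0 : 0 < l)
    (ha : ∀ j, 0 < a j)
    (hcfl : ∀ j, l * (2 * a j + 1) ≤ 1/4)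
    (hu : ∀ j, U' j = U j + l * ((V (j+1) - V (j-1)) + (U (j+1) - 2*U j + U (j-1))))
    (hv : ∀ j, V' j = V j + a j * l * ((U (j+1) - U (j-1)) + (V (j+1) - 2*V j + V (j-1)))) :
    ∑ j : ZMod Nx, (U' j ^ 2 + V' j ^ 2 / a j)
      ≤ ∑ j : ZMod Nx, (U j ^ 2 + V j ^ 2 / a j) := by
  -- abbreviations
  set P : ZMod Nx → ℝ := fun j => (V (j+1) - V (j-1)) + (U (j+1) - 2*U j + U (j-1)) with hP
  set Q : ZMod Nx → ℝ := fun j => (U (j+1) - U (j-1)) + (V (j+1) - 2*V j + V (j-1)) with hQ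
  set W : ZMod Nx → ℝ := fun j => (U (j+1) - U j)^2 + (V (j+1) - V j)^2 with hW
  have hW0 : ∀ j, 0 ≤ W j := fun j => add_nonneg (sq_nonneg _) (sq_nonneg _)
  -- expansion of the new energy
  have key : ∑ j : ZMod Nx, (U' j ^ 2 + V' j ^ 2 / a j)
      = ∑ j : ZMod Nx, ((U j ^ 2 + V j ^ 2 / a j)
          + (2*l*(U j * P j + V j * Q j) + l^2 * (P j ^ 2 + a j * Q j ^ 2))) := by
    apply Finset.sum_congr rfl
    intro j _
    have haj := (ha j).ne'
    rw [hu j, hv j]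
    simp only [hP, hQ]
    field_simp
    ring
  -- cross terms: summation by parts
  have crosskey : ∑ j : ZMod Nx, (U j * P j + V j * Q j + W j) = 0 := by
    rw [← wse_telescope (fun j => U j^2 + V j^2 + U j * V (j-1) + U (j-1) * V j
          - U (j-1)*U j - V (j-1)*V j)]
    apply Finset.sum_congr rfl
    intro j _
    simp only [hP, hQ, hW, add_sub_cancel_right]
    ring
  have cross : ∑ j : ZMod Nx, (U j * P j + V j * Q j) = - ∑ j : ZMod Nx, W j := by
    have := crosskey
    rw [Finset.sum_add_distrib] at this
    linarith
  -- quadratic terms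
  have quadpt : ∀ j : ZMod Nx, P j ^ 2 + a j * Q j ^ 2
      ≤ 4*(1 + a j)*(W j + W (j-1)) := by
    intro j
    have h := wse_foursq (U (j+1) - U j) (U j - U (j-1)) (V (j+1) - V j) (V j - V (j-1))
      (a j) (ha j).le
    simp only [hP, hQ, hW, sub_add_cancel]
    nlinarith [h]
  have quad : ∑ j : ZMod Nx, l^2 * (P j ^ 2 + a j * Q j ^ 2)
      ≤ 2*l* ∑ j : ZMod Nx, W j := by
    calc ∑ j : ZMod Nx, l^2 * (P j ^ 2 + a j * Q j ^ 2)
        ≤ ∑ j : ZMod Nx, l^2 * (4*(1 + a j)*(W j + W (j-1))) := by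
          refine Finset.sum_le_sum fun j _ => ?_
          exact mul_le_mul_of_nonneg_left (quadpt j) (sq_nonneg l)
      _ = ∑ j : ZMod Nx, (l^2 * (4*(1 + a j))*W j)
            + ∑ j : ZMod Nx, (l^2 * (4*(1 + a (j+1)))*W j) := by
          have hsh : ∑ j : ZMod Nx, (l^2 * (4*(1 + a j))*W (j-1))
              = ∑ j : ZMod Nx, (l^2 * (4*(1 + a (j+1)))*W j) := by
            rw [← wse_shift' (fun j => l^2 * (4*(1 + a (j+1)))*W j)]
            apply Finset.sum_congr rfl
            intro j _
            simp only [sub_add_cancel]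
          rw [← hsh, ← Finset.sum_add_distrib]
          apply Finset.sum_congr rfl
          intro j _
          ring
      _ ≤ ∑ j : ZMod Nx, (l*W j) + ∑ j : ZMod Nx, (l*W j) := by
          gcongr with j _ j _
          · have h1 := hcfl j
            have haj := (ha j).le
            nlinarith [mul_le_mul_of_nonneg_left h1 hl0.le,
              mul_nonneg (mul_nonneg hl0.le hl0.le) haj]
          · have h1 := hcfl (j+1)
            have haj := (ha (j+1)).le
            nlinarith [mul_le_mul_of_nonneg_left h1 hl0.le,
              mul_nonneg (mul_nonneg hl0.le hl0.le) haj]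
      _ = 2*l* ∑ j : ZMod Nx, W j := by
          rw [← Finset.sum_add_distrib, Finset.mul_sum]
          exact Finset.sum_congr rfl fun j _ => by ring
  rw [key, Finset.sum_add_distrib]
  have : ∑ j : ZMod Nx, (2*l*(U j * P j + V j * Q j) + l^2 * (P j ^ 2 + a j * Q j ^ 2)) ≤ 0 := by
    rw [Finset.sum_add_distrib]
    have c2 : ∑ j : ZMod Nx, 2*l*(U j * P j + V j * Q j) = 2*l * (- ∑ j : ZMod Nx, W j) := by
      rw [← cross, Finset.mul_sum]
    rw [c2]
    linarith [quad]
  linarith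

end aux

/-- The discrete energy of the finite difference scheme for the 1-D wave system
is nonincreasing under the CFL condition. -/
theorem wave_scheme_energy_bound (Nx : ℕ) [NeZero Nx]
    (a : ZMod Nx → ℝ) (u v : ℕ → ZMod Nx → ℝ)
    (ua oa Δt Δx : ℝ)
    (hua : 0 < ua) (hbd : ∀ j, ua ≤ a j ∧ a j ≤ oa)
    (hΔx : 0 < Δx) (hΔt : 0 < Δt)
    (hcfl : ∀ j, 2 * Δt * max (2 * a j + 1) (a j / 4 + 5 / 4) ≤ Δx)
    (hschemeu : ∀ n j, (u (n + 1) j - u n j) / Δt =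
      (v n (j + 1) - v n (j - 1)) / (2 * Δx)
        + Δx / 2 * ((u n (j + 1) - 2 * u n j + u n (j - 1)) / Δx ^ 2))
    (hschemev : ∀ n j, ((v (n + 1) j - v n j) / Δt) / a j =
      (u n (j + 1) - u n (j - 1)) / (2 * Δx)
        + Δx / 2 * ((v n (j + 1) - 2 * v n j + v n (j - 1)) / Δx ^ 2)) :
    ∀ n, Δx * ∑ j : ZMod Nx, ((u n j) ^ 2 + (v n j) ^ 2 / a j)
      ≤ Δx * ∑ j : ZMod Nx, ((u 0 j) ^ 2 + (v 0 j) ^ 2 / a j) := by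
  have ha : ∀ j, 0 < a j := fun j => hua.trans_le (hbd j).1
  set l : ℝ := Δt / (2*Δx) with hl
  have hl0 : 0 < l := div_pos hΔt (by linarith)
  have hcfl' : ∀ j, l * (2 * a j + 1) ≤ 1/4 := by
    intro j
    have h := (hcfl j).trans' (by
      have := le_max_left (2 * a j + 1) (a j / 4 + 5 / 4)
      nlinarith [hΔt.le] : 2 * Δt * (2 * a j + 1) ≤ 2 * Δt * max (2 * a j + 1) (a j / 4 + 5 / 4))
    rw [hl, div_mul_eq_mul_div, div_le_div_iff₀ (by linarith) (by norm_num)]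
    nlinarith
  have step : ∀ n, ∑ j : ZMod Nx, ((u (n+1) j) ^ 2 + (v (n+1) j) ^ 2 / a j)
      ≤ ∑ j : ZMod Nx, ((u n j) ^ 2 + (v n j) ^ 2 / a j) := by
    intro n
    apply wse_step a (u n) (v n) (u (n+1)) (v (n+1)) l hl0 ha hcfl'
    · intro j
      have h2 := (div_eq_iff hΔt.ne').mp (hschemeu n j)
      field_simp at h2
      have h3 : (2*Δx^2) * ((u (n+1) j - u n j)*(2*Δx))
          = (2*Δx^2) * (Δt * ((v n (j+1) - v n (j-1)) + (u n (j+1) - 2*u n j + u n (j-1)))) := by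
        linear_combination (2*Δx^2) * h2
      have h4 := mul_left_cancel₀ (show (2*Δx^2) ≠ 0 by positivity) h3
      have h5 := (eq_div_iff (show (2*Δx) ≠ 0 by positivity)).mpr h4
      rw [hl]
      linear_combination h5
    · intro j
      have h := hschemev n j
      rw [div_div] at h
      have h2 := (div_eq_iff ((mul_pos hΔt (ha j)).ne')).mp h
      field_simp at h2
      have h3 : (2*Δx^2) * ((v (n+1) j - v n j)*(2*Δx))
          = (2*Δx^2) * (Δt * a j * ((u n (j+1) - u n (j-1)) + (v n (j+1) - 2*v n j + v n (j-1)))) := by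
        linear_combination (2*Δx^2) * h2
      have h4 := mul_left_cancel₀ (show (2*Δx^2) ≠ 0 by positivity) h3
      have h5 := (eq_div_iff (show (2*Δx) ≠ 0 by positivity)).mpr h4
      rw [hl]
      linear_combination h5
  intro n
  have mono : ∑ j : ZMod Nx, ((u n j) ^ 2 + (v n j) ^ 2 / a j)
      ≤ ∑ j : ZMod Nx, ((u 0 j) ^ 2 + (v 0 j) ^ 2 / a j) := by
    induction n with
    | zero => exact le_refl _
    | succ k ih => exact (step k).trans ih
  exact mul_le_mul_of_nonneg_left mono hΔx.le
end

section
/- For periodic grid functions $u_j, v_j$ with $a_j$ satisfying $0 < \underline{a} \leq a_j$, and $\Delta t = \theta \Delta x$ related by the scheme $D^+_t u_j = D^c_x v_j + \frac{\Delta x}{2}D^+_x D^-_x u_j$, $D^+_t v_j/a_j = D^c_x u_j + \frac{\Delta x}{2}D^+_x D^-_x v_j$, the following identity holds: $\sum_j |D^+_t u_j|^2 + \frac{1}{a_j^2}|D^+_t v_j|^2 = \sum_j |D^c_x u_j|^2 + |D^c_x v_j|^2 + \frac{\Delta x^2}{4}\big(|D^+_x D^-_x u_j|^2 + |D^+_x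 D^-_x v_j|^2\big)$. -/
/-- Summation-by-parts: periodic cross terms vanish. -/
lemma wave_cross_sum (Nx : ℕ) [NeZero Nx] (p q : ZMod Nx → ℝ) :
    ∑ j : ZMod Nx, ((q (j + 1) - q (j - 1)) * (p (j + 1) - 2 * p j + p (j - 1))
        + (p (j + 1) - p (j - 1)) * (q (j + 1) - 2 * q j + q (j - 1))) = 0 := by
  have hG : ∀ j : ZMod Nx,
      (q (j + 1) - q (j - 1)) * (p (j + 1) - 2 * p j + p (j - 1))
        + (p (j + 1) - p (j - 1)) * (q (j + 1) - 2 * q j + q (j - 1))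
      = (2 * ((p (j + 1) - p j) * (q (j + 1) - q j)))
        - (2 * ((p (j - 1 + 1) - p (j - 1)) * (q (j - 1 + 1) - q (j - 1)))) := by
    intro j
    have h : j - 1 + 1 = j := by ring
    rw [h]; ring
  rw [Finset.sum_congr rfl fun j _ => hG j, Finset.sum_sub_distrib]
  have := Fintype.sum_equiv (Equiv.subRight (1 : ZMod Nx))
    (fun j => 2 * ((p (j - 1 + 1) - p (j - 1)) * (q (j - 1 + 1) - q (j - 1))))
    (fun j => 2 * ((p (j + 1) - p j) * (q (j + 1) - q j)))
    (fun j => rfl)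
  rw [this, sub_self]

/-- Identity (qer) relating discrete time derivatives to discrete space
derivatives for the wave-equation finite difference scheme on a periodic grid. -/
theorem wave_scheme_time_space_identity (Nx : ℕ) [NeZero Nx]
    (a : ZMod Nx → ℝ) (un u1 vn v1 : ZMod Nx → ℝ)
    (ua θ Δt Δx : ℝ)
    (hua : 0 < ua) (hbd : ∀ j, ua ≤ a j)
    (hΔx : 0 < Δx) (hΔt : 0 < Δt) (hθ : Δt = θ * Δx)
    (hschemeu : ∀ j, (u1 j - un j) / Δt =
      (vn (j + 1) - vn (j - 1)) / (2 * Δx)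
        + Δx / 2 * ((un (j + 1) - 2 * un j + un (j - 1)) / Δx ^ 2))
    (hschemev : ∀ j, ((v1 j - vn j) / Δt) / a j =
      (un (j + 1) - un (j - 1)) / (2 * Δx)
        + Δx / 2 * ((vn (j + 1) - 2 * vn j + vn (j - 1)) / Δx ^ 2)) :
    ∑ j : ZMod Nx, (((u1 j - un j) / Δt) ^ 2
        + (1 / (a j) ^ 2) * ((v1 j - vn j) / Δt) ^ 2)
      = ∑ j : ZMod Nx,
          (((un (j + 1) - un (j - 1)) / (2 * Δx)) ^ 2
            + ((vn (j + 1) - vn (j - 1)) / (2 * Δx)) ^ 2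
            + Δx ^ 2 / 4 *
              (((un (j + 1) - 2 * un j + un (j - 1)) / Δx ^ 2) ^ 2
                + ((vn (j + 1) - 2 * vn j + vn (j - 1)) / Δx ^ 2) ^ 2)) := by
  have hx : Δx ≠ 0 := ne_of_gt hΔx
  have ha : ∀ j, a j ≠ 0 := fun j => ne_of_gt (lt_of_lt_of_le hua (hbd j))
  have key : ∀ j : ZMod Nx,
      ((u1 j - un j) / Δt) ^ 2 + (1 / (a j) ^ 2) * ((v1 j - vn j) / Δt) ^ 2
      = (((un (j + 1) - un (j - 1)) / (2 * Δx)) ^ 2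
          + ((vn (j + 1) - vn (j - 1)) / (2 * Δx)) ^ 2
          + Δx ^ 2 / 4 *
            (((un (j + 1) - 2 * un j + un (j - 1)) / Δx ^ 2) ^ 2
              + ((vn (j + 1) - 2 * vn j + vn (j - 1)) / Δx ^ 2) ^ 2))
        + (1 / (2 * Δx ^ 2)) *
          ((vn (j + 1) - vn (j - 1)) * (un (j + 1) - 2 * un j + un (j - 1))
            + (un (j + 1) - un (j - 1)) * (vn (j + 1) - 2 * vn j + vn (j - 1))) := by
    intro j
    have h1 := hschemeu j
    have h2' := (div_eq_iff (ha j)).mp (hschemev j)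
    have haj := ha j
    rw [h1, h2']
    field_simp
    ring
  rw [Finset.sum_congr rfl fun j _ => key j, Finset.sum_add_distrib,
    ← Finset.mul_sum, wave_cross_sum Nx un vn, mul_zero, add_zero]
end
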